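/- arXiv:1807.04904 — 4 statements merged into one kernel-verified Lean document; each statement's English description precedes it below -/
import Mathlib

section
/- Let Θ ⊆ ℝ^r be compact and let F_Θ(Q) = {f(·;θ) : θ ∈ Θ} be the parameterized family of probability density functions on Q. Assume: (A) for almost every q ∈ Q the map θ ↦ f(q;θ) is continuous on Θ, and for every N the map θ ↦ J^N(f(·;θ);V) is continuous on Θ; (B) for any sequence of densities f_N ∈ F_Θ(Q) with f_N(q) → f(q) for almost every q ∈ Q for some f ∈ F_Θ(Q), one has v_i^N(t_j; f_N) → v_i(t_j; f) as N → ∞ for all i ∈ {1,...,m} and j ∈ {0,...,n_i}; (C) the numbers v_i(t_j; f) and v_i^N(t_j; f) are uniformly bounded over all N, all j ∈ {0,...,n_i}, i ∈ {1,...,m}, and all f ∈ F_Θ(Q). Then for every N there exists a minimizer f̂^N = f(·;θ̂^N) of J^N(·;V) over F_Θ(Q), and there exists a subsequence θ̂^{N_k} converging to some θ̂ ∈ Θ such that f̂ = f(·;θ̂) minimizes J(·;V) over F_Θ(Q). -/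
open Filter Topology MeasureTheory

/-- existence of minimizers of the approximating least squares problems
over the parameterized family of densities `F_Θ(Q) = {f(·;θ) : θ ∈ Θ}` and subsequential
convergence of the corresponding optimal parameters to a minimizer of the limiting
problem (Theorem 2.1). -/
theorem stmt_0 {p r : ℕ}
    (Q : Set (EuclideanSpace ℝ (Fin p))) (hQ : MeasurableSet Q)
    (Θ : Set (EuclideanSpace ℝ (Fin r))) (hΘc : IsCompact Θ) (hΘne : Θ.Nonempty)
    -- the parameterized family of probability densities on Q
    (f : EuclideanSpace ℝ (Fin r) → EuclideanSpace ℝ (Fin p) → ℝ)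
    (hpdf : ∀ θ ∈ Θ, (∀ q ∈ Q, 0 ≤ f θ q) ∧ (∫ q in Q, f θ q) = 1)
    -- the data and the model mean outputs and their approximations
    (m : ℕ) (hm : 0 < m) (nn : Fin m → ℕ)
    (V : (i : Fin m) → Fin (nn i + 1) → ℝ)
    (v : (i : Fin m) → Fin (nn i + 1) → (EuclideanSpace ℝ (Fin p) → ℝ) → ℝ)
    (vN : ℕ → (i : Fin m) → Fin (nn i + 1) → (EuclideanSpace ℝ (Fin p) → ℝ) → ℝ)
    -- the least squares objectives
    (J : (EuclideanSpace ℝ (Fin p) → ℝ) → ℝ)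
    (JN : ℕ → (EuclideanSpace ℝ (Fin p) → ℝ) → ℝ)
    (hJ : ∀ g, J g = ∑ i : Fin m, ∑ j : Fin (nn i + 1), (V i j - v i j g) ^ 2)
    (hJN : ∀ N g, JN N g = ∑ i : Fin m, ∑ j : Fin (nn i + 1), (V i j - vN N i j g) ^ 2)
    -- (A) continuity
    (hA1 : ∀ᵐ q ∂(volume.restrict Q), ContinuousOn (fun θ => f θ q) Θ)
    (hA2 : ∀ N, ContinuousOn (fun θ => JN N (f θ)) Θ)
    -- (B) convergence of the approximating mean outputs along a.e. convergent densities
    (hB : ∀ (θs : ℕ → EuclideanSpace ℝ (Fin r)), (∀ N, θs N ∈ Θ) →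
      ∀ θ ∈ Θ,
        (∀ᵐ q ∂(volume.restrict Q), Tendsto (fun N => f (θs N) q) atTop (𝓝 (f θ q))) →
        ∀ (i : Fin m) (j : Fin (nn i + 1)),
          Tendsto (fun N => vN N i j (f (θs N))) atTop (𝓝 (v i j (f θ))))
    -- (C) uniform boundedness
    (hC : ∃ M : ℝ, ∀ θ ∈ Θ, ∀ (i : Fin m) (j : Fin (nn i + 1)),
      |v i j (f θ)| ≤ M ∧ ∀ N, |vN N i j (f θ)| ≤ M) :
    ∃ θhat : ℕ → EuclideanSpace ℝ (Fin r),
      (∀ N, θhat N ∈ Θ ∧ ∀ θ ∈ Θ, JN N (f (θhat N)) ≤ JN N (f θ)) ∧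
      ∃ φ : ℕ → ℕ, StrictMono φ ∧ ∃ θhatlim ∈ Θ,
        Tendsto (θhat ∘ φ) atTop (𝓝 θhatlim) ∧ ∀ θ ∈ Θ, J (f θhatlim) ≤ J (f θ) := by

  -- existence of minimizers for each N
  have hmin : ∀ N : ℕ, ∃ θ, θ ∈ Θ ∧ ∀ θ' ∈ Θ, JN N (f θ) ≤ JN N (f θ') := by
    intro N
    obtain ⟨θ, hθ, hmin⟩ := hΘc.exists_isMinOn hΘne (hA2 N)
    exact ⟨θ, hθ, fun θ' hθ' => hmin hθ'⟩
  choose θhat hθhatΘ hθhatmin using hmin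
  obtain ⟨θlim, hθlim, φ, hφ, hconv⟩ := hΘc.tendsto_subseq hθhatΘ
  -- generic: diagonal convergence of JN along a sequence with a.e. convergent densities
  have hJtend : ∀ (θs : ℕ → EuclideanSpace ℝ (Fin r)), (∀ N, θs N ∈ Θ) →
      ∀ θ ∈ Θ,
      (∀ᵐ q ∂(volume.restrict Q), Tendsto (fun N => f (θs N) q) atTop (𝓝 (f θ q))) →
      Tendsto (fun N => JN N (f (θs N))) atTop (𝓝 (J (f θ))) := by
    intro θs hθs θ hθ hae
    have h := hB θs hθs θ hθ hae
    have heq : (fun N => JN N (f (θs N)))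
        = fun N => ∑ i : Fin m, ∑ j : Fin (nn i + 1), (V i j - vN N i j (f (θs N))) ^ 2 := by
      funext N; exact hJN N (f (θs N))
    rw [heq, hJ]
    refine tendsto_finset_sum _ (fun i _ => tendsto_finset_sum _ (fun j _ => ?_))
    exact (tendsto_const_nhds.sub (h i j)).pow 2
  -- constant sequences: JN N (f θ) → J (f θ)
  have hJconst : ∀ θ ∈ Θ, Tendsto (fun N => JN N (f θ)) atTop (𝓝 (J (f θ))) := by
    intro θ hθ
    exact hJtend (fun _ => θ) (fun _ => hθ) θ hθ
      (Filter.Eventually.of_forall fun q => tendsto_const_nhds)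
  -- the "filled in" index sequence
  set k : ℕ → ℕ := fun N => Nat.findGreatest (fun j => φ j ≤ N) N with hk
  have hφge : ∀ j, j ≤ φ j := fun j => hφ.le_apply
  have hktend : Tendsto k atTop atTop := by
    refine tendsto_atTop.2 fun K => ?_
    filter_upwards [eventually_ge_atTop (φ K)] with N hN
    exact Nat.le_findGreatest (le_trans (hφge K) hN) hN
  have hkφ : ∀ j, k (φ j) = j := by
    intro j
    rw [hk]
    rw [Nat.findGreatest_eq_iff]
    refine ⟨hφge j, fun _ => le_rfl, fun n hn _ hPn => ?_⟩
    exact absurd hPn (not_le.2 (hφ hn))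
  -- the filled-in parameter sequence
  set θs : ℕ → EuclideanSpace ℝ (Fin r) := fun N => θhat (φ (k N)) with hθsdef
  have hθsΘ : ∀ N, θs N ∈ Θ := fun N => hθhatΘ _
  have hθstend : Tendsto θs atTop (𝓝 θlim) := hconv.comp hktend
  -- a.e. pointwise convergence of densities
  have hae : ∀ᵐ q ∂(volume.restrict Q),
      Tendsto (fun N => f (θs N) q) atTop (𝓝 (f θlim q)) := by
    filter_upwards [hA1] with q hq
    have hW : Tendsto θs atTop (𝓝[Θ] θlim) :=
      tendsto_nhdsWithin_of_tendsto_nhds_of_eventually_within θs hθstend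
        (Filter.Eventually.of_forall hθsΘ)
    exact (hq θlim hθlim).tendsto.comp hW
  have hJdiag := hJtend θs hθsΘ θlim hθlim hae
  -- along the subsequence φ
  have hJsub : Tendsto (fun ℓ => JN (φ ℓ) (f (θhat (φ ℓ)))) atTop (𝓝 (J (f θlim))) := by
    have := hJdiag.comp hφ.tendsto_atTop
    convert this using 2 with ℓ
    simp [hθsdef, hkφ, Function.comp]
  refine ⟨θhat, fun N => ⟨hθhatΘ N, hθhatmin N⟩, φ, hφ, θlim, hθlim, hconv, ?_⟩
  intro θ hθ
  have hJθ : Tendsto (fun ℓ => JN (φ ℓ) (f θ)) atTop (𝓝 (J (f θ))) :=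
    (hJconst θ hθ).comp hφ.tendsto_atTop
  exact le_of_tendsto_of_tendsto' hJsub hJθ (fun ℓ => hθhatmin (φ ℓ) θ hθ)
end

section
/- Let H be a Hilbert space with norm |·|, and for each N ∈ ℕ let H^N be a Hilbert space with norm |·|_N and U^N a closed subspace of H^N. Let I^N : H → H^N be linear with range all of H^N and |I^N z|_N ≤ |z| for all z ∈ H, let p^N : H^N → U^N be the orthogonal projection of H^N onto U^N, and set P^N = p^N ∘ I^N. Let S : [0,∞) → L(H) and, for each N, S^N : [0,∞) → L(U^N) be strongly continuous one-parameter semigroups of bounded linear operators (S(0) = I, S(t+s) = S(t)S(s) for s,t ≥ 0, and t ↦ S(t)z continuous for each z; similarly for S^N) satisfying the uniform bounds ‖S(t)‖ ≤ M e^{λ₀ t} and ‖S^N(t)‖ ≤ M e^{λ₀ t} for all t ≥ 0 and all N, with M ≥ 1 and λ₀ ∈ ℝ independent of N. For λ > λ₀ define the resolvent operators by the Bochner integrals R_λ z = ∫₀^∞ e^{−λ t} S(t) z dt (z ∈ H) and R_λ^N w = ∫₀^∞ e^{−λ t} S^N(t) w dt (w ∈ U^N). Suppose that for some λ > λ₀,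 |P^N R_λ z − R_λ^N P^N z|_N → 0 as N → ∞ for every z ∈ H. Then for every z ∈ H and every T > 0, sup_{0 ≤ t ≤ T} |P^N S(t) z − S^N(t) P^N z|_N → 0 as N → ∞. -/
open Filter Topology MeasureTheory

set_option linter.unusedSectionVars false
set_option linter.unusedVariables false

namespace TK56

variable {E F : Type*} [NormedAddCommGroup E] [NormedSpace ℝ E] [CompleteSpace E]
  [NormedAddCommGroup F] [NormedSpace ℝ F] [CompleteSpace F]

structure SG (E : Type*) [NormedAddCommGroup E] [NormedSpace ℝ E] (M lam0 : ℝ) : Type _ where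
  T : ℝ → E →L[ℝ] E
  h0 : T 0 = ContinuousLinearMap.id ℝ E
  hadd : ∀ s t : ℝ, 0 ≤ s → 0 ≤ t → T (t + s) = (T t).comp (T s)
  hcont : ∀ z : E, ContinuousOn (fun t => T t z) (Set.Ici 0)
  hbound : ∀ t : ℝ, 0 ≤ t → ‖T t‖ ≤ M * Real.exp (lam0 * t)

variable {M lam0 lam : ℝ}

namespace SG

theorem apply_apply (G : SG E M lam0) {s t : ℝ} (hs : 0 ≤ s) (ht : 0 ≤ t) (z : E) :
    G.T t (G.T s z) = G.T (t + s) z := by rw [G.hadd s t hs ht]; rfl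

theorem comm_apply (G : SG E M lam0) {s t : ℝ} (hs : 0 ≤ s) (ht : 0 ≤ t) (z : E) :
    G.T t (G.T s z) = G.T s (G.T t z) := by
  rw [G.apply_apply hs ht, G.apply_apply ht hs, add_comm]

theorem contOn_integrand (G : SG E M lam0) (lam : ℝ) (z : E) :
    ContinuousOn (fun t => Real.exp (-(lam * t)) • G.T t z) (Set.Ici 0) :=
  ((Real.continuous_exp.comp (continuous_const.mul continuous_id).neg).continuousOn).smul
    (G.hcont z)

theorem norm_integrand_le (G : SG E M lam0) (hM : 0 ≤ M) (z : E) {t : ℝ} (ht : 0 ≤ t) :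
    ‖Real.exp (-(lam * t)) • G.T t z‖ ≤ M * Real.exp (-(lam - lam0) * t) * ‖z‖ := by
  have h1 : ‖G.T t z‖ ≤ M * Real.exp (lam0 * t) * ‖z‖ :=
    le_trans ((G.T t).le_opNorm z)
      (mul_le_mul_of_nonneg_right (G.hbound t ht) (norm_nonneg z))
  calc ‖Real.exp (-(lam * t)) • G.T t z‖ = Real.exp (-(lam * t)) * ‖G.T t z‖ := by
        rw [norm_smul, Real.norm_eq_abs, abs_of_pos (Real.exp_pos _)]
    _ ≤ Real.exp (-(lam * t)) * (M * Real.exp (lam0 * t) * ‖z‖) := by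
        exact mul_le_mul_of_nonneg_left h1 (Real.exp_pos _).le
    _ = M * (Real.exp (-(lam * t)) * Real.exp (lam0 * t)) * ‖z‖ := by ring
    _ = M * Real.exp (-(lam - lam0) * t) * ‖z‖ := by
        rw [← Real.exp_add]; congr 2; ring

theorem integrableOn_aux (G : SG E M lam0) (hM : 0 ≤ M) (hlam : lam0 < lam) (z : E) :
    IntegrableOn (fun t => Real.exp (-(lam * t)) • G.T t z) (Set.Ioi 0) := by
  have hdom : IntegrableOn (fun t => M * Real.exp (-(lam - lam0) * t) * ‖z‖) (Set.Ioi 0) := by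
    have := (exp_neg_integrableOn_Ioi 0 (show (0:ℝ) < lam - lam0 by linarith))
    exact (this.const_mul M).mul_const ‖z‖
  refine Integrable.mono' hdom
    (((G.contOn_integrand lam z).mono Set.Ioi_subset_Ici_self).aestronglyMeasurable
      measurableSet_Ioi) ?_
  filter_upwards [ae_restrict_mem measurableSet_Ioi] with t ht
  exact G.norm_integrand_le hM z (le_of_lt ht)

end SG

noncomputable def c0 (M lam0 lam : ℝ) : ℝ := ∫ t in Set.Ioi (0:ℝ), M * Real.exp (-(lam - lam0) * t)

namespace SG

theorem norm_res_le (G : SG E M lam0) (hM : 0 ≤ M) (hlam : lam0 < lam) (z : E) :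
    ‖∫ t in Set.Ioi (0:ℝ), Real.exp (-(lam * t)) • G.T t z‖ ≤ c0 M lam0 lam * ‖z‖ := by
  refine le_trans (norm_integral_le_integral_norm _) ?_
  have h1 : ∫ t in Set.Ioi (0:ℝ), ‖Real.exp (-(lam * t)) • G.T t z‖
      ≤ ∫ t in Set.Ioi (0:ℝ), M * Real.exp (-(lam - lam0) * t) * ‖z‖ := by
    refine setIntegral_mono_on (G.integrableOn_aux hM hlam z).norm ?_ measurableSet_Ioi ?_
    · have := (exp_neg_integrableOn_Ioi 0 (show (0:ℝ) < lam - lam0 by linarith))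
      exact (this.const_mul M).mul_const ‖z‖
    · intro t ht; exact G.norm_integrand_le hM z (le_of_lt ht)
  refine le_trans h1 (le_of_eq ?_)
  rw [c0, integral_mul_const]

/-- The resolvent, given as the Laplace transform of the semigroup. -/
noncomputable def R (G : SG E M lam0) (hM : 0 ≤ M) (hlam : lam0 < lam) : E →L[ℝ] E :=
  LinearMap.mkContinuous
    { toFun := fun z => ∫ t in Set.Ioi (0:ℝ), Real.exp (-(lam * t)) • G.T t z
      map_add' := fun z w => by
        have : (fun t => Real.exp (-(lam * t)) • G.T t (z + w))
            = fun t => Real.exp (-(lam * t)) • G.T t z + Real.exp (-(lam * t)) • G.T t w := by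
          funext t; rw [map_add, smul_add]
        show (∫ t in Set.Ioi (0:ℝ), Real.exp (-(lam * t)) • G.T t (z + w)) = _
        rw [this, integral_add (G.integrableOn_aux hM hlam z) (G.integrableOn_aux hM hlam w)]
      map_smul' := fun c z => by
        have : (fun t => Real.exp (-(lam * t)) • G.T t (c • z))
            = fun t => c • (Real.exp (-(lam * t)) • G.T t z) := by
          funext t; rw [_root_.map_smul, smul_comm]
        show (∫ t in Set.Ioi (0:ℝ), Real.exp (-(lam * t)) • G.T t (c • z)) = _
        rw [this, integral_smul]; rfl }
    (c0 M lam0 lam) (fun z => G.norm_res_le hM hlam z)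

theorem R_apply (G : SG E M lam0) (hM : 0 ≤ M) (hlam : lam0 < lam) (z : E) :
    G.R hM hlam z = ∫ t in Set.Ioi (0:ℝ), Real.exp (-(lam * t)) • G.T t z := rfl

theorem c0_nonneg (hM : 0 ≤ M) : 0 ≤ c0 M lam0 lam := by
  refine setIntegral_nonneg measurableSet_Ioi (fun t _ => ?_)
  positivity

theorem norm_R_le (G : SG E M lam0) (hM : 0 ≤ M) (hlam : lam0 < lam) :
    ‖G.R hM hlam‖ ≤ c0 M lam0 lam :=
  LinearMap.mkContinuous_norm_le _ (c0_nonneg hM) _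

theorem T_comm_R (G : SG E M lam0) (hM : 0 ≤ M) (hlam : lam0 < lam) {s : ℝ} (hs : 0 ≤ s)
    (z : E) : G.T s (G.R hM hlam z) = G.R hM hlam (G.T s z) := by
  rw [R_apply, R_apply, ← ContinuousLinearMap.integral_comp_comm _ (G.integrableOn_aux hM hlam z)]
  refine setIntegral_congr_fun measurableSet_Ioi (fun t ht => ?_)
  rw [_root_.map_smul, G.comm_apply hs (le_of_lt ht)]

end SG
namespace SG

theorem intervalIntegrable_aux (G : SG E M lam0) (z : E) {a : ℝ} (ha : 0 ≤ a) :
    IntervalIntegrable (fun t => Real.exp (-(lam * t)) • G.T t z) volume 0 a :=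
  ((G.contOn_integrand lam z).mono (by rw [Set.uIcc_of_le ha]; exact Set.Icc_subset_Ici_self)).intervalIntegrable

theorem intervalIntegrable_T (G : SG E M lam0) (z : E) {a : ℝ} (ha : 0 ≤ a) :
    IntervalIntegrable (fun t => G.T t z) volume 0 a :=
  ((G.hcont z).mono (by rw [Set.uIcc_of_le ha]; exact Set.Icc_subset_Ici_self)).intervalIntegrable

/-- The shift formula for the resolvent. -/
theorem R_T (G : SG E M lam0) (hM : 0 ≤ M) (hlam : lam0 < lam) {s : ℝ} (hs : 0 ≤ s) (z : E) :
    G.R hM hlam (G.T s z)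
      = Real.exp (lam * s) •
          (G.R hM hlam z - ∫ t in (0:ℝ)..s, Real.exp (-(lam * t)) • G.T t z) := by
  set f : ℝ → E := fun u => Real.exp (-(lam * u)) • G.T u z with hf
  have hint : IntegrableOn f (Set.Ioi 0) := G.integrableOn_aux hM hlam z
  have h1 : G.R hM hlam (G.T s z)
      = ∫ t in Set.Ioi (0:ℝ), Real.exp (lam * s) • f (t + s) := by
    rw [R_apply]
    refine setIntegral_congr_fun measurableSet_Ioi (fun t ht => ?_)
    have h2 : G.T t (G.T s z) = G.T (t + s) z := G.apply_apply hs (le_of_lt ht) z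
    rw [h2, hf]
    simp only [smul_smul]
    rw [← Real.exp_add]
    congr 2
    ring
  have hcv : (∫ t in Set.Ioi (0:ℝ), f (t + s)) = ∫ u in Set.Ioi s, f u := by
    have h := (measurePreserving_add_right volume s).setIntegral_preimage_emb
      (measurableEmbedding_addRight s) f (Set.Ioi s)
    rw [show (fun x => x + s) ⁻¹' Set.Ioi s = Set.Ioi (0:ℝ) by ext x; simp] at h
    exact h
  have hsplit : (∫ u in Set.Ioi (0:ℝ), f u)
      = (∫ u in Set.Ioc (0:ℝ) s, f u) + ∫ u in Set.Ioi s, f u := by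
    rw [← setIntegral_union (Set.Ioc_disjoint_Ioi le_rfl) measurableSet_Ioi
      (hint.mono_set Set.Ioc_subset_Ioi_self) (hint.mono_set (Set.Ioi_subset_Ioi hs)),
      Set.Ioc_union_Ioi_eq_Ioi hs]
  rw [h1, integral_smul, hcv]
  rw [intervalIntegral.integral_of_le hs]
  rw [R_apply]
  congr 1
  rw [show (∫ t in Set.Ioi (0:ℝ), Real.exp (-(lam * t)) • G.T t z) = ∫ u in Set.Ioi (0:ℝ), f u from rfl, hsplit]
  abel

/-- Averages of a continuous function tend to its value at `0`. -/
theorem avg_tendsto {g : ℝ → E} (hg : ContinuousOn g (Set.Ici 0)) :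
    Tendsto (fun h : ℝ => h⁻¹ • ∫ t in (0:ℝ)..h, g t) (𝓝[>] 0) (𝓝 (g 0)) := by
  rw [Metric.tendsto_nhdsWithin_nhds]
  intro ε hε
  obtain ⟨δ, hδ, hδ'⟩ := Metric.continuousWithinAt_iff.1 (hg 0 Set.self_mem_Ici) (ε/2)
    (half_pos hε)
  refine ⟨δ, hδ, ?_⟩
  intro x hx hxd
  have hx0 : (0:ℝ) < x := hx
  have hInt : IntervalIntegrable g volume 0 x :=
    ((hg.mono (by rw [Set.uIcc_of_le hx0.le]; exact Set.Icc_subset_Ici_self)).intervalIntegrable)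
  have hxabs : |x| < δ := by rwa [Real.dist_eq, sub_zero] at hxd
  have key : x⁻¹ • (∫ t in (0:ℝ)..x, g t) - g 0 = x⁻¹ • ∫ t in (0:ℝ)..x, (g t - g 0) := by
    rw [intervalIntegral.integral_sub hInt intervalIntegrable_const,
      intervalIntegral.integral_const, smul_sub, sub_zero, smul_smul,
      inv_mul_cancel₀ (ne_of_gt hx0), one_smul]
  rw [dist_eq_norm, key, norm_smul]
  have hbound : ‖∫ t in (0:ℝ)..x, (g t - g 0)‖ ≤ (ε/2) * |x - 0| := by
    refine intervalIntegral.norm_integral_le_of_norm_le_const (fun t ht => ?_)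
    rw [Set.uIoc_of_le hx0.le] at ht
    have ht0 : (0:ℝ) < t := ht.1
    have htδ : dist t 0 < δ := by
      rw [Real.dist_eq, sub_zero, abs_of_pos ht0]
      exact lt_of_le_of_lt ht.2 (lt_of_le_of_lt (le_abs_self x) hxabs)
    have := hδ' (Set.mem_Ici.2 ht0.le) htδ
    rw [dist_eq_norm] at this
    exact this.le
  calc ‖x⁻¹‖ * ‖∫ t in (0:ℝ)..x, (g t - g 0)‖ ≤ ‖x⁻¹‖ * ((ε/2) * |x - 0|) := by
        exact mul_le_mul_of_nonneg_left hbound (norm_nonneg _)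
    _ = (ε/2) := by
        rw [sub_zero, Real.norm_eq_abs, abs_inv]
        rw [mul_comm (ε/2) |x|, ← mul_assoc, inv_mul_cancel₀ (by positivity), one_mul]
    _ < ε := half_lt_self hε

/-- The right derivative of the semigroup at `0` on elements of the range of the resolvent. -/
theorem deriv_res_zero (G : SG E M lam0) (hM : 0 ≤ M) (hlam : lam0 < lam) (v : E) :
    Tendsto (fun h : ℝ => h⁻¹ • (G.T h (G.R hM hlam v) - G.R hM hlam v)) (𝓝[>] 0)
      (𝓝 (lam • G.R hM hlam v - v)) := by
  have key : ∀ h ∈ Set.Ioi (0:ℝ),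
      h⁻¹ • (G.T h (G.R hM hlam v) - G.R hM hlam v)
        = (h⁻¹ * (Real.exp (lam * h) - 1)) • G.R hM hlam v
          - Real.exp (lam * h) • (h⁻¹ • ∫ t in (0:ℝ)..h, Real.exp (-(lam * t)) • G.T t v) := by
    intro h hh
    rw [G.T_comm_R hM hlam (le_of_lt hh), G.R_T hM hlam (le_of_lt hh)]
    module
  have l1 : Tendsto (fun h : ℝ => h⁻¹ * (Real.exp (lam * h) - 1)) (𝓝[>] 0) (𝓝 lam) := by
    have hd : HasDerivAt (fun x : ℝ => Real.exp (lam * x)) lam 0 := by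
      simpa using ((hasDerivAt_id (0:ℝ)).const_mul lam).exp
    have := (hd.hasDerivWithinAt (s := Set.Ioi 0))
    rw [hasDerivWithinAt_iff_tendsto_slope] at this
    rw [show Set.Ioi (0:ℝ) \ {0} = Set.Ioi 0 from
      Set.diff_singleton_eq_self (by simp)] at this
    refine this.congr (fun h => ?_)
    rw [slope_def_field]
    rw [div_eq_inv_mul, mul_zero, Real.exp_zero, sub_zero]
  have l2 : Tendsto (fun h : ℝ => Real.exp (lam * h)) (𝓝[>] 0) (𝓝 1) := by
    have h1 : Tendsto (fun h : ℝ => Real.exp (lam * h)) (𝓝 0) (𝓝 (Real.exp (lam * 0))) :=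
      (Real.continuous_exp.comp (continuous_const.mul continuous_id)).tendsto 0
    have h2 := h1.mono_left (nhdsWithin_le_nhds (s := Set.Ioi (0:ℝ)))
    simpa using h2
  have l3 : Tendsto (fun h : ℝ => h⁻¹ • ∫ t in (0:ℝ)..h, Real.exp (-(lam * t)) • G.T t v)
      (𝓝[>] 0) (𝓝 v) := by
    have := avg_tendsto (G.contOn_integrand lam v)
    simpa [G.h0] using this
  have main := (l1.smul_const (G.R hM hlam v)).sub (l2.smul l3)
  rw [one_smul] at main
  exact main.congr' (by filter_upwards [self_mem_nhdsWithin] with h hh; exact (key h hh).symm)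

theorem tendsto_sub_Ioi {s : ℝ} : Tendsto (fun σ : ℝ => σ - s) (𝓝[>] s) (𝓝[>] 0) := by
  rw [tendsto_nhdsWithin_iff]
  constructor
  · have : Tendsto (fun σ : ℝ => σ - s) (𝓝 s) (𝓝 (s - s)) :=
      (continuous_id.sub continuous_const).tendsto s
    rw [sub_self] at this
    exact this.mono_left nhdsWithin_le_nhds
  · filter_upwards [eventually_mem_nhdsWithin] with σ hσ
    exact Set.mem_Ioi.2 (sub_pos.2 (Set.mem_Ioi.1 hσ))

/-- Right derivative of `σ ↦ T σ (R x)` at `s ≥ 0`, as a slope限 limit. -/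
theorem deriv_T_right (G : SG E M lam0) (hM : 0 ≤ M) (hlam : lam0 < lam) (x : E) {s : ℝ}
    (hs : 0 ≤ s) :
    Tendsto (fun σ : ℝ => (σ - s)⁻¹ • (G.T σ (G.R hM hlam x) - G.T s (G.R hM hlam x)))
      (𝓝[>] s) (𝓝 (G.T s (lam • G.R hM hlam x - x))) := by
  have base := (G.deriv_res_zero hM hlam x).comp (tendsto_sub_Ioi (s := s))
  have main := ((G.T s).continuous.tendsto _).comp base
  refine main.congr' ?_
  filter_upwards [eventually_mem_nhdsWithin] with σ hσ
  have hσs : (0:ℝ) ≤ σ - s := sub_nonneg.2 (le_of_lt hσ)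
  show G.T s ((σ - s)⁻¹ • (G.T (σ - s) (G.R hM hlam x) - G.R hM hlam x)) = _
  rw [_root_.map_smul, map_sub, G.apply_apply hσs hs, show s + (σ - s) = σ by ring]

/-- Strong continuity with uniformly bounded operators allows passing to limits jointly. -/
theorem tendsto_apply (G : SG E M lam0) (hM : 0 ≤ M) {ι : Type*} {l : Filter ι} {τf : ι → ℝ}
    {τ : ℝ} (hτ0 : 0 ≤ τ) (hτ : Tendsto τf l (𝓝 τ)) (hmem : ∀ᶠ i in l, 0 ≤ τf i)
    {vf : ι → E} {v : E} (hv : Tendsto vf l (𝓝 v)) :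
    Tendsto (fun i => G.T (τf i) (vf i)) l (𝓝 (G.T τ v)) := by
  have hB : Tendsto (fun i => G.T (τf i) v) l (𝓝 (G.T τ v)) := by
    have h1 : Tendsto τf l (𝓝[Set.Ici 0] τ) := tendsto_nhdsWithin_iff.2 ⟨hτ, hmem⟩
    exact (G.hcont v τ hτ0).tendsto.comp h1
  have hA : Tendsto (fun i => G.T (τf i) (vf i) - G.T (τf i) v) l (𝓝 0) := by
    set C := M * Real.exp (|lam0| * (τ + 1)) with hC
    have hbd : ∀ᶠ i in l, ‖G.T (τf i) (vf i) - G.T (τf i) v‖ ≤ C * ‖vf i - v‖ := by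
      filter_upwards [hmem, hτ.eventually (eventually_le_nhds (lt_add_one τ))] with i h0i h1i
      rw [← map_sub]
      refine le_trans ((G.T (τf i)).le_opNorm _)
        (mul_le_mul_of_nonneg_right (le_trans (G.hbound _ h0i) ?_) (norm_nonneg _))
      refine mul_le_mul_of_nonneg_left (Real.exp_le_exp.2 ?_) hM
      calc lam0 * τf i ≤ |lam0| * τf i := mul_le_mul_of_nonneg_right (le_abs_self _) h0i
        _ ≤ |lam0| * (τ + 1) := mul_le_mul_of_nonneg_left h1i (abs_nonneg _)
    have hnorm : Tendsto (fun i => ‖vf i - v‖) l (𝓝 0) := by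
      rw [← tendsto_iff_norm_sub_tendsto_zero]
      exact hv
    refine squeeze_zero_norm' hbd ?_
    have := hnorm.const_mul C
    simpa using this
  have := hA.add hB
  simpa using this

theorem continuousOn_comp (G : SG E M lam0) (hM : 0 ≤ M) {t : ℝ} {v : ℝ → E}
    (hv : ContinuousOn v (Set.Icc 0 t)) :
    ContinuousOn (fun s => G.T (t - s) (v s)) (Set.Icc 0 t) := by
  intro s₀ hs₀
  have h1 : Tendsto (fun s : ℝ => t - s) (𝓝[Set.Icc 0 t] s₀) (𝓝 (t - s₀)) := by
    exact ((continuous_const.sub continuous_id).tendsto s₀).mono_left nhdsWithin_le_nhds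
  have h2 : ∀ᶠ s in 𝓝[Set.Icc 0 t] s₀, 0 ≤ t - s := by
    filter_upwards [eventually_mem_nhdsWithin] with s hs
    exact sub_nonneg.2 hs.2
  exact G.tendsto_apply hM (sub_nonneg.2 hs₀.2) h1 h2 (hv s₀ hs₀)

end SG
namespace SG

/-- The fundamental interpolation identity (★) between the two semigroups. -/
theorem star (GH : SG E M lam0) (GF : SG F M lam0) (hM : 0 ≤ M) (hlam : lam0 < lam)
    (P : E →L[ℝ] F) {t : ℝ} (ht : 0 ≤ t) (x : E) :
    GF.R hM hlam (P (GH.T t (GH.R hM hlam x))) - GF.T t (GF.R hM hlam (P (GH.R hM hlam x)))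
      = ∫ s in (0:ℝ)..t, GF.T (t - s)
          (P (GH.R hM hlam (GH.T s x)) - GF.R hM hlam (P (GH.T s x))) := by
  set y : E := GH.R hM hlam x with hy
  set Φ : ℝ → F := fun s => GF.T (t - s) (GF.R hM hlam (P (GH.T s y))) with hΦ
  set Φ' : ℝ → F := fun s =>
    GF.T (t - s) (P (GH.R hM hlam (GH.T s x)) - GF.R hM hlam (P (GH.T s x))) with hΦ'
  have hΦt : Φ t = GF.R hM hlam (P (GH.T t y)) := by
    simp only [hΦ, sub_self, GF.h0, ContinuousLinearMap.id_apply]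
  have hΦ0 : Φ 0 = GF.T t (GF.R hM hlam (P y)) := by
    simp only [hΦ, sub_zero, GH.h0, ContinuousLinearMap.id_apply]
  -- continuity of Φ on [0, t]
  have hycont : ContinuousOn (fun s => GH.T s y) (Set.Icc 0 t) :=
    (GH.hcont y).mono Set.Icc_subset_Ici_self
  have hΦcont : ContinuousOn Φ (Set.Icc 0 t) := by
    refine GF.continuousOn_comp hM ?_
    exact ((GF.R hM hlam).continuous.comp P.continuous).comp_continuousOn hycont
  -- continuity (hence integrability) of Φ'
  have hΦ'cont : ContinuousOn Φ' (Set.Icc 0 t) := by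
    refine GF.continuousOn_comp hM ?_
    refine ContinuousOn.sub ?_ ?_
    · exact (P.continuous.comp (GH.R hM hlam).continuous).comp_continuousOn
        ((GH.hcont x).mono Set.Icc_subset_Ici_self)
    · exact ((GF.R hM hlam).continuous.comp P.continuous).comp_continuousOn
        ((GH.hcont x).mono Set.Icc_subset_Ici_self)
  have hΦ'int : IntervalIntegrable Φ' volume 0 t :=
    (hΦ'cont.mono (by rw [Set.uIcc_of_le ht])).intervalIntegrable
  -- the right derivative of Φ
  have hderiv : ∀ s ∈ Set.Ioo 0 t, HasDerivWithinAt Φ (Φ' s) (Set.Ioi s) s := by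
    intro s hs
    have hs0 : (0:ℝ) ≤ s := hs.1.le
    have hst : s < t := hs.2
    rw [hasDerivWithinAt_iff_tendsto_slope,
      show Set.Ioi s \ {s} = Set.Ioi s from Set.diff_singleton_eq_self (by simp)]
    set w : F := GF.R hM hlam (P (GH.T s y)) with hw
    set vv : F := P (GH.T s y) with hvv
    -- eventual facts
    have hevle : ∀ᶠ σ in 𝓝[>] s, σ ≤ t :=
      (tendsto_nhdsWithin_of_tendsto_nhds tendsto_id).eventually (eventually_le_nhds hst)
    have htends : Tendsto (fun σ : ℝ => t - σ) (𝓝[>] s) (𝓝 (t - s)) :=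
      ((continuous_const.sub continuous_id).tendsto s).mono_left nhdsWithin_le_nhds
    have hmem : ∀ᶠ σ in 𝓝[>] s, 0 ≤ t - σ := by
      filter_upwards [hevle] with σ hσ; exact sub_nonneg.2 hσ
    -- part A
    have hgslope : Tendsto
        (fun σ : ℝ => (σ - s)⁻¹ • (GF.R hM hlam (P (GH.T σ y)) - w)) (𝓝[>] s)
        (𝓝 (GF.R hM hlam (P (GH.T s (lam • y - x))))) := by
      have h1 := GH.deriv_T_right hM hlam x hs0
      have h2 := (((GF.R hM hlam).comp P).continuous.tendsto _).comp h1
      refine h2.congr (fun σ => ?_)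
      show (GF.R hM hlam) (P ((σ - s)⁻¹ • (GH.T σ y - GH.T s y))) = _
      rw [_root_.map_smul, _root_.map_smul, map_sub, map_sub]
    have hA : Tendsto
        (fun σ : ℝ => GF.T (t - σ) ((σ - s)⁻¹ • (GF.R hM hlam (P (GH.T σ y)) - w)))
        (𝓝[>] s) (𝓝 (GF.T (t - s) (GF.R hM hlam (P (GH.T s (lam • y - x)))))) :=
      GF.tendsto_apply hM (by linarith) htends hmem hgslope
    -- part B
    have hBinner : Tendsto (fun σ : ℝ => (σ - s)⁻¹ • (w - GF.T (σ - s) w)) (𝓝[>] s)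
        (𝓝 (vv - lam • w)) := by
      have h1 := (GF.deriv_res_zero hM hlam vv).comp (tendsto_sub_Ioi (s := s))
      have h2 := h1.neg
      rw [show -(lam • GF.R hM hlam vv - vv) = vv - lam • GF.R hM hlam vv from neg_sub _ _] at h2
      refine (h2.congr (fun σ => ?_))
      show -((σ - s)⁻¹ • (GF.T (σ - s) (GF.R hM hlam vv) - GF.R hM hlam vv)) = _
      rw [← smul_neg, neg_sub]
    have hB : Tendsto
        (fun σ : ℝ => GF.T (t - σ) ((σ - s)⁻¹ • (w - GF.T (σ - s) w))) (𝓝[>] s)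
        (𝓝 (GF.T (t - s) (vv - lam • w))) :=
      GF.tendsto_apply hM (by linarith) htends hmem hBinner
    -- combine
    have hsum := hA.add hB
    have hval : GF.T (t - s) (GF.R hM hlam (P (GH.T s (lam • y - x))))
        + GF.T (t - s) (vv - lam • w) = Φ' s := by
      rw [← map_add]
      congr 1
      show GF.R hM hlam (P (GH.T s (lam • y - x)))
          + (P (GH.T s y) - lam • GF.R hM hlam (P (GH.T s y)))
        = P (GH.R hM hlam (GH.T s x)) - GF.R hM hlam (P (GH.T s x))
      have e2 : P (GH.T s y) = P (GH.R hM hlam (GH.T s x)) := by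
        rw [hy, GH.T_comm_R hM hlam hs0]
      simp only [map_sub, _root_.map_smul]
      rw [e2]
      module
    rw [hval] at hsum
    refine hsum.congr' ?_
    filter_upwards [eventually_mem_nhdsWithin, hevle] with σ hσ hσt
    have hσs : (0:ℝ) ≤ σ - s := sub_nonneg.2 (le_of_lt hσ)
    have htσ : (0:ℝ) ≤ t - σ := sub_nonneg.2 hσt
    have hsplit : GF.T (t - s) w = GF.T (t - σ) (GF.T (σ - s) w) := by
      rw [GF.apply_apply hσs htσ, show t - σ + (σ - s) = t - s by ring]
    show GF.T (t - σ) ((σ - s)⁻¹ • (GF.R hM hlam (P (GH.T σ y)) - w))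
        + GF.T (t - σ) ((σ - s)⁻¹ • (w - GF.T (σ - s) w)) = slope Φ s σ
    rw [slope_def_module]
    rw [_root_.map_smul, _root_.map_smul, ← smul_add, map_sub, map_sub]
    congr 1
    rw [hΦ]
    show (GF.T (t - σ)) ((GF.R hM hlam) (P ((GH.T σ) y))) - (GF.T (t - σ)) w
        + ((GF.T (t - σ)) w - (GF.T (t - σ)) ((GF.T (σ - s)) w))
      = GF.T (t - σ) (GF.R hM hlam (P (GH.T σ y))) - GF.T (t - s) (GF.R hM hlam (P (GH.T s y)))
    rw [hsplit]
    abel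
  have hFTC := intervalIntegral.integral_eq_sub_of_hasDeriv_right_of_le ht hΦcont hderiv hΦ'int
  rw [hFTC, hΦt, hΦ0]

end SG
namespace SG

/-- Averages of the orbit lie in the range of the resolvent. -/
theorem avg_mem_range (G : SG E M lam0) (hM : 0 ≤ M) (hlam : lam0 < lam) (w : E) {h : ℝ}
    (hh : 0 < h) :
    G.R hM hlam (lam • (h⁻¹ • ∫ u in (0:ℝ)..h, G.T u w) - h⁻¹ • (G.T h w - w))
      = h⁻¹ • ∫ u in (0:ℝ)..h, G.T u w := by
  set Fp : ℝ → E := fun u => ∫ r in (0:ℝ)..u, Real.exp (-(lam * r)) • G.T r w with hFpdef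
  have hintg : ContinuousOn (fun r => Real.exp (-(lam * r)) • G.T r w) (Set.Ici 0) :=
    G.contOn_integrand lam w
  have hexpc : Continuous (fun u : ℝ => Real.exp (lam * u)) :=
    Real.continuous_exp.comp (continuous_const.mul continuous_id)
  have hFpcont : ContinuousOn Fp (Set.Icc 0 h) := by
    have h1 : IntegrableOn (fun r => Real.exp (-(lam * r)) • G.T r w) (Set.uIcc 0 h) := by
      refine ContinuousOn.integrableOn_compact isCompact_uIcc ?_
      exact hintg.mono (by rw [Set.uIcc_of_le hh.le]; exact Set.Icc_subset_Ici_self)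
    have := intervalIntegral.continuousOn_primitive_interval h1
    rwa [Set.uIcc_of_le hh.le] at this
  have hexp : ∀ u : ℝ, HasDerivAt (fun x => Real.exp (lam * x)) (Real.exp (lam * u) * lam) u := by
    intro u
    have := ((hasDerivAt_id u).const_mul lam).exp
    simpa using this
  -- (i)
  have hI1 : ∫ u in (0:ℝ)..h, Real.exp (lam * u) * lam = Real.exp (lam * h) - 1 := by
    have := intervalIntegral.integral_eq_sub_of_hasDerivAt (fun u _ => hexp u)
      ((hexpc.mul continuous_const).intervalIntegrable 0 h)
    simpa using this
  -- (ii)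
  have hkey : (∫ u in (0:ℝ)..h, G.T u w)
      = Real.exp (lam * h) • Fp h - ∫ u in (0:ℝ)..h, (Real.exp (lam * u) * lam) • Fp u := by
    set φ : ℝ → E := fun u => Real.exp (lam * u) • Fp u with hφdef
    have hφcont : ContinuousOn φ (Set.Icc 0 h) := hexpc.continuousOn.smul hFpcont
    have hφderiv : ∀ u ∈ Set.Ioo 0 h,
        HasDerivWithinAt φ ((Real.exp (lam * u) * lam) • Fp u + G.T u w) (Set.Ioi u) u := by
      intro u hu
      have hFpd : HasDerivAt Fp (Real.exp (-(lam * u)) • G.T u w) u := by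
        refine intervalIntegral.integral_hasDerivAt_right
          (G.intervalIntegrable_aux w hu.1.le)
          ⟨Set.Ici 0, Ici_mem_nhds hu.1, hintg.aestronglyMeasurable measurableSet_Ici⟩
          (hintg.continuousAt (Ici_mem_nhds hu.1))
      have hd := (hexp u).smul hFpd
      have h2 : Real.exp (lam * u) • (Real.exp (-(lam * u)) • G.T u w) = G.T u w := by
        rw [smul_smul, ← Real.exp_add, add_neg_cancel, Real.exp_zero, one_smul]
      rw [h2, add_comm] at hd
      exact hd.hasDerivWithinAt
    have hcont1 : ContinuousOn (fun u => (Real.exp (lam * u) * lam) • Fp u) (Set.Icc 0 h) :=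
      ((hexpc.mul continuous_const).continuousOn).smul hFpcont
    have hcont2 : ContinuousOn (fun u => G.T u w) (Set.Icc 0 h) :=
      (G.hcont w).mono Set.Icc_subset_Ici_self
    have hφint : IntervalIntegrable
        (fun u => (Real.exp (lam * u) * lam) • Fp u + G.T u w) volume 0 h :=
      ((hcont1.add hcont2).mono (by rw [Set.uIcc_of_le hh.le])).intervalIntegrable
    have hFTC2 := intervalIntegral.integral_eq_sub_of_hasDeriv_right_of_le hh.le hφcont
      hφderiv hφint
    rw [intervalIntegral.integral_add
        ((hcont1.mono (by rw [Set.uIcc_of_le hh.le])).intervalIntegrable)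
        ((hcont2.mono (by rw [Set.uIcc_of_le hh.le])).intervalIntegrable)] at hFTC2
    have hφ0 : φ 0 = 0 := by
      simp only [hφdef, hFpdef, intervalIntegral.integral_same, smul_zero]
    rw [hφ0, sub_zero] at hFTC2
    exact eq_sub_of_add_eq' hFTC2
  -- main computation
  have f2 : G.R hM hlam (G.T h w) = Real.exp (lam * h) • (G.R hM hlam w - Fp h) :=
    G.R_T hM hlam hh.le w
  have f1 : G.R hM hlam (∫ u in (0:ℝ)..h, G.T u w)
      = (∫ u in (0:ℝ)..h, Real.exp (lam * u)) • G.R hM hlam w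
        - ∫ u in (0:ℝ)..h, Real.exp (lam * u) • Fp u := by
    rw [← ContinuousLinearMap.intervalIntegral_comp_comm _ (G.intervalIntegrable_T w hh.le)]
    have hcg : ∀ u ∈ Set.uIcc (0:ℝ) h,
        G.R hM hlam (G.T u w) = Real.exp (lam * u) • G.R hM hlam w - Real.exp (lam * u) • Fp u := by
      intro u hu
      rw [Set.uIcc_of_le hh.le] at hu
      rw [G.R_T hM hlam hu.1 w, smul_sub]
    rw [intervalIntegral.integral_congr hcg]
    rw [intervalIntegral.integral_sub (f := fun u => Real.exp (lam * u) • G.R hM hlam w)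
        (g := fun u => Real.exp (lam * u) • Fp u)
        ((hexpc.smul continuous_const).intervalIntegrable 0 h)
        (((hexpc.continuousOn.smul hFpcont).mono
          (by rw [Set.uIcc_of_le hh.le])).intervalIntegrable),
      intervalIntegral.integral_smul_const]
  have e4 : (∫ u in (0:ℝ)..h, (Real.exp (lam * u) * lam) • Fp u)
      = lam • ∫ u in (0:ℝ)..h, Real.exp (lam * u) • Fp u := by
    rw [← intervalIntegral.integral_smul]
    refine intervalIntegral.integral_congr (fun u _ => ?_)
    rw [smul_smul, mul_comm]
  have e5 : (∫ u in (0:ℝ)..h, Real.exp (lam * u)) * lam = Real.exp (lam * h) - 1 := by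
    rw [← intervalIntegral.integral_mul_const]
    exact hI1
  simp only [map_sub, _root_.map_smul]
  rw [f1, f2]
  rw [hkey, e4]
  rw [show Real.exp (lam * h) = (∫ u in (0:ℝ)..h, Real.exp (lam * u)) * lam + 1 from by
    linarith [e5]]
  module

theorem exists_avg (G : SG E M lam0) (w : E) {ε : ℝ} (hε : 0 < ε) :
    ∃ h : ℝ, 0 < h ∧ ‖(h⁻¹ • ∫ u in (0:ℝ)..h, G.T u w) - w‖ < ε := by
  have h1 := avg_tendsto (g := fun u => G.T u w) (G.hcont w)
  have h1' : Tendsto (fun h : ℝ => h⁻¹ • ∫ u in (0:ℝ)..h, G.T u w) (𝓝[>] 0) (𝓝 w) := by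
    simpa [G.h0] using h1
  have h2 := (Metric.tendsto_nhds.1 h1') ε hε
  have h3 := (h2.and eventually_mem_nhdsWithin).exists
  obtain ⟨h, hd, hmem⟩ := h3
  exact ⟨h, hmem, by rwa [dist_eq_norm] at hd⟩

/-- Density of the range of `R ∘ R`. -/
theorem dense_R2 (G : SG E M lam0) (hM : 0 ≤ M) (hlam : lam0 < lam) (w : E) {ε : ℝ}
    (hε : 0 < ε) : ∃ x : E, ‖G.R hM hlam (G.R hM hlam x) - w‖ < ε := by
  obtain ⟨h₁, hh₁, hc₁⟩ := G.exists_avg w (half_pos hε)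
  set v₁ : E := h₁⁻¹ • ∫ u in (0:ℝ)..h₁, G.T u w with hv₁def
  set x₁ : E := lam • v₁ - h₁⁻¹ • (G.T h₁ w - w) with hx₁def
  have hv₁ : G.R hM hlam x₁ = v₁ := G.avg_mem_range hM hlam w hh₁
  obtain ⟨h₂, hh₂, hc₂⟩ := G.exists_avg v₁ (half_pos hε)
  have comm : (h₂⁻¹ • ∫ u in (0:ℝ)..h₂, G.T u v₁)
      = G.R hM hlam (h₂⁻¹ • ∫ u in (0:ℝ)..h₂, G.T u x₁) := by
    have step : ∀ u ∈ Set.uIcc (0:ℝ) h₂, G.T u v₁ = G.R hM hlam (G.T u x₁) := by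
      intro u hu
      rw [Set.uIcc_of_le hh₂.le] at hu
      rw [← hv₁, G.T_comm_R hM hlam hu.1]
    rw [intervalIntegral.integral_congr step,
      ContinuousLinearMap.intervalIntegral_comp_comm _ (G.intervalIntegrable_T x₁ hh₂.le),
      _root_.map_smul]
  have hv₂ : G.R hM hlam (lam • (h₂⁻¹ • ∫ u in (0:ℝ)..h₂, G.T u x₁)
      - h₂⁻¹ • (G.T h₂ x₁ - x₁)) = h₂⁻¹ • ∫ u in (0:ℝ)..h₂, G.T u x₁ :=
    G.avg_mem_range hM hlam x₁ hh₂
  refine ⟨lam • (h₂⁻¹ • ∫ u in (0:ℝ)..h₂, G.T u x₁) - h₂⁻¹ • (G.T h₂ x₁ - x₁), ?_⟩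
  rw [hv₂, ← comm]
  calc ‖(h₂⁻¹ • ∫ u in (0:ℝ)..h₂, G.T u v₁) - w‖
      ≤ ‖(h₂⁻¹ • ∫ u in (0:ℝ)..h₂, G.T u v₁) - v₁‖ + ‖v₁ - w‖ := by
        have := dist_triangle (h₂⁻¹ • ∫ u in (0:ℝ)..h₂, G.T u v₁) v₁ w
        simpa [dist_eq_norm] using this
    _ < ε/2 + ε/2 := add_lt_add hc₂ hc₁
    _ = ε := add_halves ε

end SG
end TK56

set_option maxHeartbeats 2000000 in
open TK56 in
/-- a version of the Trotter–Kato semigroup approximation theorem in which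
the approximating spaces `H^N` (with closed subspaces `U^N`) are not subspaces of `H`:
convergence of the resolvents (given as Laplace transforms of the semigroups) implies
convergence of the semigroups, uniformly on compact time intervals (Theorem 5.1). -/
theorem stmt_6 {H : Type*} [NormedAddCommGroup H] [InnerProductSpace ℝ H] [CompleteSpace H]
    {HN : ℕ → Type*} [∀ N, NormedAddCommGroup (HN N)] [∀ N, InnerProductSpace ℝ (HN N)]
    [∀ N, CompleteSpace (HN N)]
    (UN : ∀ N, Submodule ℝ (HN N)) (hUNclosed : ∀ N, IsClosed (UN N : Set (HN N)))
    [∀ N, Submodule.HasOrthogonalProjection (UN N)] [∀ N, CompleteSpace ↥(UN N)]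
    (IN : ∀ N, H →L[ℝ] HN N) (hINsurj : ∀ N, Function.Surjective (IN N))
    (hINnorm : ∀ N (z : H), ‖IN N z‖ ≤ ‖z‖)
    (S : ℝ → H →L[ℝ] H) (SN : ∀ N, ℝ → (↥(UN N) →L[ℝ] ↥(UN N)))
    (M lam0 : ℝ) (hM : 1 ≤ M)
    -- semigroup properties of S
    (hS0 : S 0 = ContinuousLinearMap.id ℝ H)
    (hSadd : ∀ s t : ℝ, 0 ≤ s → 0 ≤ t → S (t + s) = (S t).comp (S s))
    (hScont : ∀ z : H, ContinuousOn (fun t => S t z) (Set.Ici 0))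
    (hSbound : ∀ t : ℝ, 0 ≤ t → ‖S t‖ ≤ M * Real.exp (lam0 * t))
    -- semigroup properties of the S^N, with bounds uniform in N
    (hSN0 : ∀ N, SN N 0 = ContinuousLinearMap.id ℝ ↥(UN N))
    (hSNadd : ∀ N, ∀ s t : ℝ, 0 ≤ s → 0 ≤ t → SN N (t + s) = (SN N t).comp (SN N s))
    (hSNcont : ∀ N, ∀ w : ↥(UN N), ContinuousOn (fun t => SN N t w) (Set.Ici 0))
    (hSNbound : ∀ N, ∀ t : ℝ, 0 ≤ t → ‖SN N t‖ ≤ M * Real.exp (lam0 * t))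
    (lam : ℝ) (hlam : lam0 < lam)
    -- resolvent convergence (5.6): P^N R_λ z − R_λ^N P^N z → 0 for every z, where
    -- P^N = p^N ∘ I^N and the resolvents are Laplace transforms of the semigroups
    (hres : ∀ z : H,
      Tendsto (fun N =>
          ‖(Submodule.orthogonalProjectionOnto (UN N))
              (IN N (∫ t in Set.Ioi (0:ℝ), Real.exp (-(lam * t)) • S t z))
            - ∫ t in Set.Ioi (0:ℝ), Real.exp (-(lam * t)) •
                SN N t ((Submodule.orthogonalProjectionOnto (UN N)) (IN N z))‖)
        atTop (𝓝 0)) :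
    -- conclusion: P^N S(t) z − S^N(t) P^N z → 0 uniformly in t on compact intervals
    ∀ z : H, ∀ T : ℝ, 0 < T → ∀ ε : ℝ, 0 < ε → ∃ N₀ : ℕ, ∀ N ≥ N₀, ∀ t ∈ Set.Icc (0:ℝ) T,
      ‖(Submodule.orthogonalProjectionOnto (UN N)) (IN N (S t z))
          - SN N t ((Submodule.orthogonalProjectionOnto (UN N)) (IN N z))‖ < ε := by
  intro z T hT ε hε
  classical
  have hM0 : (0:ℝ) ≤ M := le_trans zero_le_one hM
  set GH : TK56.SG H M lam0 := ⟨S, hS0, hSadd, hScont, hSbound⟩ with hGH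
  set GN : ∀ N, TK56.SG ↥(UN N) M lam0 :=
    fun N => ⟨SN N, hSN0 N, hSNadd N, hSNcont N, hSNbound N⟩ with hGNdef
  set P : ∀ N, H →L[ℝ] ↥(UN N) := fun N => (Submodule.orthogonalProjectionOnto (UN N)).comp (IN N) with hPdef
  have hPnorm : ∀ N (v : H), ‖P N v‖ ≤ ‖v‖ := by
    intro N v
    calc ‖P N v‖ ≤ ‖Submodule.orthogonalProjectionOnto (UN N)‖ * ‖IN N v‖ :=
          (Submodule.orthogonalProjectionOnto (UN N)).le_opNorm _
      _ ≤ 1 * ‖IN N v‖ :=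
          mul_le_mul_of_nonneg_right (Submodule.orthogonalProjectionOnto_norm_le _) (norm_nonneg _)
      _ = ‖IN N v‖ := one_mul _
      _ ≤ ‖v‖ := hINnorm N v
  set Δ : ∀ N, H → ↥(UN N) := fun N u =>
    P N (GH.R hM0 hlam u) - (GN N).R hM0 hlam (P N u) with hΔdef
  have hres' : ∀ u : H, Tendsto (fun N => ‖Δ N u‖) atTop (𝓝 0) := fun u => hres u
  set c1 : ℝ := TK56.c0 M lam0 lam with hc1
  have hc1n : 0 ≤ c1 := TK56.SG.c0_nonneg hM0
  have hΔlip : ∀ N (u v : H), ‖Δ N u - Δ N v‖ ≤ (2*c1+1) * ‖u - v‖ := by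
    intro N u v
    have h1 : Δ N u - Δ N v
        = (P N (GH.R hM0 hlam (u-v))) - (GN N).R hM0 hlam (P N (u-v)) := by
      simp only [hΔdef, map_sub]; abel
    rw [h1]
    have h2a : ‖P N (GH.R hM0 hlam (u-v))‖ ≤ c1 * ‖u-v‖ :=
      le_trans (hPnorm N _) (le_trans ((GH.R hM0 hlam).le_opNorm _)
        (mul_le_mul_of_nonneg_right (GH.norm_R_le hM0 hlam) (norm_nonneg _)))
    have h2b : ‖(GN N).R hM0 hlam (P N (u-v))‖ ≤ c1 * ‖u-v‖ := by
      refine le_trans (((GN N).R hM0 hlam).le_opNorm _) ?_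
      refine mul_le_mul ((GN N).norm_R_le hM0 hlam) (hPnorm N _) (norm_nonneg _) hc1n
    calc ‖P N (GH.R hM0 hlam (u-v)) - (GN N).R hM0 hlam (P N (u-v))‖
        ≤ ‖P N (GH.R hM0 hlam (u-v))‖ + ‖(GN N).R hM0 hlam (P N (u-v))‖ := norm_sub_le _ _
      _ ≤ c1 * ‖u-v‖ + c1 * ‖u-v‖ := add_le_add h2a h2b
      _ ≤ (2*c1+1) * ‖u-v‖ := by nlinarith [norm_nonneg (u-v)]
  set C : ℝ := M * Real.exp (|lam0| * T) with hC
  have hC1 : 1 ≤ C := by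
    have h1 : Real.exp 0 ≤ Real.exp (|lam0| * T) := Real.exp_le_exp.2 (by positivity)
    rw [Real.exp_zero] at h1
    nlinarith
  have hC0 : (0:ℝ) < C := lt_of_lt_of_le one_pos hC1
  have hexpbd : ∀ τ : ℝ, τ ∈ Set.Icc (0:ℝ) T → M * Real.exp (lam0 * τ) ≤ C := by
    intro τ hτ
    rw [hC]
    refine mul_le_mul_of_nonneg_left (Real.exp_le_exp.2 ?_) hM0
    calc lam0 * τ ≤ |lam0| * τ := mul_le_mul_of_nonneg_right (le_abs_self _) hτ.1
      _ ≤ |lam0| * T := mul_le_mul_of_nonneg_left hτ.2 (abs_nonneg _)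
  have hSC : ∀ τ ∈ Set.Icc (0:ℝ) T, ‖GH.T τ‖ ≤ C := fun τ hτ =>
    le_trans (GH.hbound τ hτ.1) (hexpbd τ hτ)
  have hSNC : ∀ N, ∀ τ ∈ Set.Icc (0:ℝ) T, ‖(GN N).T τ‖ ≤ C := fun N τ hτ =>
    le_trans ((GN N).hbound τ hτ.1) (hexpbd τ hτ)
  -- approximation from the dense set
  set εz : ℝ := ε / (3*(2*C+1)) with hεz
  have hεzpos : 0 < εz := by positivity
  obtain ⟨x', hx'⟩ := GH.dense_R2 hM0 hlam z hεzpos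
  set y : H := GH.R hM0 hlam (GH.R hM0 hlam x') with hy
  have hzy : ‖z - y‖ < εz := by rw [hy, norm_sub_rev]; exact hx'
  -- compact set
  set K1 : Set H := (fun s => GH.T s x') '' Set.Icc 0 T with hK1
  have hK1c : IsCompact K1 :=
    isCompact_Icc.image_of_continuousOn ((GH.hcont x').mono Set.Icc_subset_Ici_self)
  set K : Set H := K1 ∪ (GH.R hM0 hlam '' K1) with hK
  have hKc : IsCompact K := hK1c.union (hK1c.image (GH.R hM0 hlam).continuous)
  set ε' : ℝ := ε / (3 * (1 + C + C*T)) with hε'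
  have hε'pos : 0 < ε' := by positivity
  -- uniform smallness of Δ on the compact set K
  have huk : ∃ N₀ : ℕ, ∀ N ≥ N₀, ∀ u ∈ K, ‖Δ N u‖ < ε' := by
    set r : ℝ := ε' / (2 * (2*c1+1)) with hr
    have hrpos : 0 < r := by positivity
    have hcover : K ⊆ ⋃ u : K, Metric.ball (u:H) r := by
      intro u hu; exact Set.mem_iUnion.2 ⟨⟨u, hu⟩, Metric.mem_ball_self hrpos⟩
    obtain ⟨tset, htset⟩ := hKc.elim_finite_subcover (fun u : K => Metric.ball (u:H) r)
      (fun _ => Metric.isOpen_ball) hcover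
    have hev : ∀ᶠ N in atTop, ∀ i ∈ tset, ‖Δ N (i:H)‖ < ε'/2 := by
      rw [eventually_all_finset]
      intro i _
      exact (hres' (i:H)).eventually (gt_mem_nhds (by positivity))
    obtain ⟨N₀, hN₀⟩ := eventually_atTop.1 hev
    refine ⟨N₀, fun N hN u hu => ?_⟩
    obtain ⟨i, hi, hui⟩ := Set.mem_iUnion₂.1 (htset hu)
    have hdist : ‖u - (i:H)‖ < r := by rwa [Metric.mem_ball, dist_eq_norm] at hui
    have heq : (2*c1+1) * r = ε'/2 := by rw [hr]; field_simp
    calc ‖Δ N u‖ = ‖(Δ N u - Δ N (i:H)) + Δ N (i:H)‖ := by rw [sub_add_cancel]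
      _ ≤ ‖Δ N u - Δ N (i:H)‖ + ‖Δ N (i:H)‖ := norm_add_le _ _
      _ < (2*c1+1) * r + ε'/2 := by
          refine add_lt_add_of_le_of_lt ?_ (hN₀ N hN i hi)
          exact le_trans (hΔlip N u i) (mul_le_mul_of_nonneg_left hdist.le (by positivity))
      _ = ε' := by rw [heq]; exact add_halves _
  obtain ⟨N₀, hN₀⟩ := huk
  refine ⟨N₀, fun N hN t ht => ?_⟩
  have ht0 : (0:ℝ) ≤ t := ht.1
  show ‖P N (GH.T t z) - (GN N).T t (P N z)‖ < ε
  -- Lipschitz replacement of z by y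
  have hQlip : ‖(P N (GH.T t z) - (GN N).T t (P N z))
      - (P N (GH.T t y) - (GN N).T t (P N y))‖ ≤ 2*C*‖z - y‖ := by
    have h1 : (P N (GH.T t z) - (GN N).T t (P N z)) - (P N (GH.T t y) - (GN N).T t (P N y))
        = P N (GH.T t (z-y)) - (GN N).T t (P N (z-y)) := by
      simp only [map_sub]; abel
    rw [h1]
    have h2a : ‖P N (GH.T t (z-y))‖ ≤ C*‖z-y‖ :=
      le_trans (hPnorm N _) (le_trans ((GH.T t).le_opNorm _)
        (mul_le_mul_of_nonneg_right (hSC t ht) (norm_nonneg _)))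
    have h2b : ‖(GN N).T t (P N (z-y))‖ ≤ C*‖z-y‖ :=
      le_trans (((GN N).T t).le_opNorm _)
        (mul_le_mul (hSNC N t ht) (hPnorm N _) (norm_nonneg _) hC0.le)
    calc ‖P N (GH.T t (z-y)) - (GN N).T t (P N (z-y))‖
        ≤ ‖P N (GH.T t (z-y))‖ + ‖(GN N).T t (P N (z-y))‖ := norm_sub_le _ _
      _ ≤ C*‖z-y‖ + C*‖z-y‖ := add_le_add h2a h2b
      _ = 2*C*‖z-y‖ := by ring
  -- the decomposition of the main term via (★)
  have hstar := TK56.SG.star GH (GN N) hM0 hlam (P N) ht0 x'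
  have hcommt : GH.T t y = GH.R hM0 hlam (GH.T t (GH.R hM0 hlam x')) := by
    rw [hy]; exact GH.T_comm_R hM0 hlam ht0 _
  have hdecomp : P N (GH.T t y) - (GN N).T t (P N y)
      = (Δ N (GH.T t (GH.R hM0 hlam x')) - (GN N).T t (Δ N (GH.R hM0 hlam x')))
        + ∫ s in (0:ℝ)..t, (GN N).T (t-s)
            (P N (GH.R hM0 hlam (GH.T s x')) - (GN N).R hM0 hlam (P N (GH.T s x'))) := by
    rw [← hstar]
    simp only [hΔdef, hy, map_sub, hcommt]
    rw [GH.T_comm_R hM0 hlam ht0 (GH.R hM0 hlam x')]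
    abel
  -- bounds for the three pieces
  have hterm1 : ‖Δ N (GH.T t (GH.R hM0 hlam x'))‖ < ε' := by
    have harg : GH.T t (GH.R hM0 hlam x') = GH.R hM0 hlam (GH.T t x') :=
      GH.T_comm_R hM0 hlam ht0 _
    rw [harg]
    exact hN₀ N hN _ (Or.inr ⟨GH.T t x', ⟨t, ht, rfl⟩, rfl⟩)
  have hterm2 : ‖(GN N).T t (Δ N (GH.R hM0 hlam x'))‖ ≤ C * ε' := by
    have hmem : GH.R hM0 hlam x' ∈ K := by
      refine Or.inr ⟨x', ⟨0, ⟨le_rfl, hT.le⟩, ?_⟩, rfl⟩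
      show GH.T 0 x' = x'
      rw [GH.h0]; rfl
    refine le_trans (((GN N).T t).le_opNorm _) ?_
    exact mul_le_mul (hSNC N t ht) (hN₀ N hN _ hmem).le (norm_nonneg _) hC0.le
  have hterm3 : ‖∫ s in (0:ℝ)..t, (GN N).T (t-s)
      (P N (GH.R hM0 hlam (GH.T s x')) - (GN N).R hM0 hlam (P N (GH.T s x')))‖
      ≤ C * ε' * T := by
    have h1 : ∀ s ∈ Set.uIoc (0:ℝ) t, ‖(GN N).T (t-s)
        (P N (GH.R hM0 hlam (GH.T s x')) - (GN N).R hM0 hlam (P N (GH.T s x')))‖ ≤ C * ε' := by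
      intro s hs
      rw [Set.uIoc_of_le ht0] at hs
      have hs0 : (0:ℝ) ≤ s := hs.1.le
      have hmem : GH.T s x' ∈ K := Or.inl ⟨s, ⟨hs0, le_trans hs.2 ht.2⟩, rfl⟩
      have hb := hN₀ N hN _ hmem
      rw [hΔdef] at hb
      refine le_trans (((GN N).T (t-s)).le_opNorm _) ?_
      refine mul_le_mul (hSNC N (t-s) ⟨by linarith [hs.2], by linarith [ht.2, hs.1]⟩)
        hb.le (norm_nonneg _) hC0.le
    have h2 := intervalIntegral.norm_integral_le_of_norm_le_const h1
    rw [sub_zero, abs_of_nonneg ht0] at h2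
    refine le_trans h2 ?_
    exact mul_le_mul_of_nonneg_left ht.2 (by positivity)
  -- assemble
  have hQy : ‖P N (GH.T t y) - (GN N).T t (P N y)‖ ≤ ε' + C * ε' + C * ε' * T := by
    rw [hdecomp]
    calc ‖_ + _‖ ≤ ‖Δ N (GH.T t (GH.R hM0 hlam x')) - (GN N).T t (Δ N (GH.R hM0 hlam x'))‖
          + ‖∫ s in (0:ℝ)..t, (GN N).T (t-s)
              (P N (GH.R hM0 hlam (GH.T s x')) - (GN N).R hM0 hlam (P N (GH.T s x')))‖ :=
        norm_add_le _ _
      _ ≤ (‖Δ N (GH.T t (GH.R hM0 hlam x'))‖ + ‖(GN N).T t (Δ N (GH.R hM0 hlam x'))‖)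
          + C * ε' * T := add_le_add (norm_sub_le _ _) hterm3
      _ ≤ ε' + C * ε' + C * ε' * T := by
          have := add_le_add (add_le_add hterm1.le hterm2) (le_refl (C * ε' * T))
          linarith
  have hfinal1 : 2*C*‖z - y‖ < ε/3 := by
    have h1 : 2*C*‖z - y‖ < 2*C*εz := by
      exact mul_lt_mul_of_pos_left hzy (by positivity)
    have h2 : 2*C*εz ≤ ε/3 := by
      rw [hεz, ← mul_div_assoc]
      rw [div_le_div_iff₀ (by positivity) (by norm_num : (0:ℝ) < 3)]
      nlinarith [hε.le, hC0.le]
    linarith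
  have hfinal2 : ε' + C * ε' + C * ε' * T ≤ ε/3 := by
    have : ε' * (1 + C + C*T) = ε/3 := by
      rw [hε']
      field_simp
    nlinarith [hε'pos.le]
  calc ‖P N (GH.T t z) - (GN N).T t (P N z)‖
      = ‖((P N (GH.T t z) - (GN N).T t (P N z)) - (P N (GH.T t y) - (GN N).T t (P N y)))
          + (P N (GH.T t y) - (GN N).T t (P N y))‖ := by rw [sub_add_cancel]
    _ ≤ ‖(P N (GH.T t z) - (GN N).T t (P N z)) - (P N (GH.T t y) - (GN N).T t (P N y))‖
          + ‖P N (GH.T t y) - (GN N).T t (P N y)‖ := norm_add_le _ _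
    _ ≤ 2*C*‖z - y‖ + (ε' + C * ε' + C * ε' * T) := add_le_add hQlip hQy
    _ < ε/3 + ε/3 := by linarith
    _ < ε := by linarith
end

section
/- Let H and K be Banach spaces, A ∈ L(H) and B ∈ L(K) bounded linear operators, P ∈ L(H, K) a bounded linear operator, and λ ∈ ℂ such that λI − A is invertible in L(H) and λI − B is invertible in L(K), with resolvents R_λ(A) = (λI − A)⁻¹ and R_λ(B) = (λI − B)⁻¹. Then for every t ≥ 0, R_λ(B) ∘ (P ∘ exp(tA) − exp(tB) ∘ P) ∘ R_λ(A) = ∫₀^t exp((t−s)B) ∘ (P ∘ R_λ(A) − R_λ(B) ∘ P) ∘ exp(sA) ds, where exp denotes the operator exponential and the integral is a Bochner integral in L(H, K). -/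
set_option maxHeartbeats 1000000


open intervalIntegral


/-- the key integral identity (5.11) for bounded generators:
`R_λ(B) (P exp(tA) − exp(tB) P) R_λ(A) = ∫₀^t exp((t−s)B) (P R_λ(A) − R_λ(B) P) exp(sA) ds`. -/
theorem stmt_7 {H K : Type*} [NormedAddCommGroup H] [NormedSpace ℂ H] [CompleteSpace H]
    [NormedAddCommGroup K] [NormedSpace ℂ K] [CompleteSpace K]
    (A : H →L[ℂ] H) (B : K →L[ℂ] K) (P : H →L[ℂ] K) (lam : ℂ)
    (RA : H →L[ℂ] H) (RB : K →L[ℂ] K)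
    (hRA₁ : (lam • ContinuousLinearMap.id ℂ H - A).comp RA = ContinuousLinearMap.id ℂ H)
    (hRA₂ : RA.comp (lam • ContinuousLinearMap.id ℂ H - A) = ContinuousLinearMap.id ℂ H)
    (hRB₁ : (lam • ContinuousLinearMap.id ℂ K - B).comp RB = ContinuousLinearMap.id ℂ K)
    (hRB₂ : RB.comp (lam • ContinuousLinearMap.id ℂ K - B) = ContinuousLinearMap.id ℂ K)
    (t : ℝ) (ht : 0 ≤ t) :
    (RB.comp ((P.comp (NormedSpace.exp ((t : ℂ) • A))
          - (NormedSpace.exp ((t : ℂ) • B)).comp P).comp RA))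
      = ∫ s in (0:ℝ)..t,
          (NormedSpace.exp (((t - s : ℝ) : ℂ) • B)).comp
            ((P.comp RA - RB.comp P).comp (NormedSpace.exp ((s : ℂ) • A))) := by
  -- basic resolvent identities
  have hARA : A.comp RA = lam • RA - ContinuousLinearMap.id ℂ H := by
    have := hRA₁
    rw [ContinuousLinearMap.sub_comp, ContinuousLinearMap.smul_comp,
      ContinuousLinearMap.id_comp] at this
    linear_combination (norm := abel) -this
  have hRAA : RA.comp A = lam • RA - ContinuousLinearMap.id ℂ H := by
    have := hRA₂
    rw [ContinuousLinearMap.comp_sub, ContinuousLinearMap.comp_smul,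
      ContinuousLinearMap.comp_id] at this
    linear_combination (norm := abel) -this
  have hBRB : B.comp RB = lam • RB - ContinuousLinearMap.id ℂ K := by
    have := hRB₁
    rw [ContinuousLinearMap.sub_comp, ContinuousLinearMap.smul_comp,
      ContinuousLinearMap.id_comp] at this
    linear_combination (norm := abel) -this
  have hRBB : RB.comp B = lam • RB - ContinuousLinearMap.id ℂ K := by
    have := hRB₂
    rw [ContinuousLinearMap.comp_sub, ContinuousLinearMap.comp_smul,
      ContinuousLinearMap.comp_id] at this
    linear_combination (norm := abel) -this
  -- commutation facts
  have hcA : Commute A RA := by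
    unfold Commute SemiconjBy
    change A.comp RA = RA.comp A
    rw [hARA, hRAA]
  have hcB : Commute B RB := by
    unfold Commute SemiconjBy
    change B.comp RB = RB.comp B
    rw [hBRB, hRBB]
  set E : H →L[ℂ] K := RB.comp (P.comp RA) with hE
  set g : ℝ → (H →L[ℂ] K) := fun s =>
    (NormedSpace.exp (((t : ℂ) - (s : ℂ)) • B)).comp
      (E.comp (NormedSpace.exp ((s : ℂ) • A))) with hg
  have hderiv : ∀ s : ℝ,
      HasDerivAt g
        ((NormedSpace.exp (((t - s : ℝ) : ℂ) • B)).comp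
          ((P.comp RA - RB.comp P).comp (NormedSpace.exp ((s : ℂ) • A)))) s := by
    intro s
    have hB : HasDerivAt (fun u : ℂ => NormedSpace.exp (u • B))
        (NormedSpace.exp (((t : ℂ) - (s : ℂ)) • B) * B) ((t : ℂ) - (s : ℂ)) :=
      hasDerivAt_exp_smul_const B _
    have hlin : HasDerivAt (fun u : ℂ => (t : ℂ) - u) (-1 : ℂ) (s : ℂ) := by
      simpa using ((hasDerivAt_id (s : ℂ)).const_sub (t : ℂ))
    have h1 : HasDerivAt (fun u : ℂ => NormedSpace.exp (((t : ℂ) - u) • B))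
        ((-1 : ℂ) • (NormedSpace.exp (((t : ℂ) - (s : ℂ)) • B) * B)) (s : ℂ) :=
      HasDerivAt.scomp (𝕜 := ℂ) (s : ℂ) hB hlin
    have h2 : HasDerivAt (fun u : ℂ => NormedSpace.exp (u • A))
        (NormedSpace.exp ((s : ℂ) • A) * A) ((s : ℂ)) :=
      hasDerivAt_exp_smul_const A _
    have h3 : HasDerivAt (fun u : ℂ => E.comp (NormedSpace.exp (u • A)))
        (E.comp (NormedSpace.exp ((s : ℂ) • A) * A)) ((s : ℂ)) := by
      have := (hasDerivAt_const ((s : ℂ)) E).clm_comp h2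
      simpa using this
    have h4c := h1.clm_comp h3
    have h4 := HasDerivAt.scomp (𝕜 := ℝ) s h4c Complex.ofRealCLM.hasDerivAt
    simp only [Complex.ofRealCLM_apply, Complex.ofReal_one, one_smul] at h4
    refine h4.congr_deriv (Eq.symm ?_)
    -- algebraic identity
    push_cast
    set eA := NormedSpace.exp ((s : ℂ) • A)
    set eB := NormedSpace.exp (((t : ℂ) - (s : ℂ)) • B)
    have heAA : eA * A = A * eA := by
      have : Commute ((s : ℂ) • A) A := (Commute.refl A).smul_left _
      exact (this.exp_left).eq
    have heBB : eB * B = B * eB := by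
      have : Commute (((t : ℂ) - (s : ℂ)) • B) B := (Commute.refl B).smul_left _
      exact (this.exp_left).eq
    have hmulA : eA * A = eA.comp A := rfl
    have hmulA' : A * eA = A.comp eA := rfl
    have hmulB : eB * B = eB.comp B := rfl
    have hmulB' : B * eB = B.comp eB := rfl
    rw [hmulA, hmulA'] at heAA
    rw [hmulB, hmulB'] at heBB
    have key : E.comp A - B.comp E = P.comp RA - RB.comp P := by
      have e1 : E.comp A = lam • E - RB.comp P := by
        rw [hE, ContinuousLinearMap.comp_assoc, ContinuousLinearMap.comp_assoc, hRAA]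
        simp [ContinuousLinearMap.comp_sub, ContinuousLinearMap.comp_smul,
          ContinuousLinearMap.comp_id, ContinuousLinearMap.comp_assoc]
      have e2 : B.comp E = lam • E - P.comp RA := by
        rw [hE, ← ContinuousLinearMap.comp_assoc, ← ContinuousLinearMap.comp_assoc, hBRB]
        simp [ContinuousLinearMap.sub_comp, ContinuousLinearMap.smul_comp,
          ContinuousLinearMap.id_comp, ContinuousLinearMap.comp_assoc]
      rw [e1, e2]; abel
    calc eB.comp ((P.comp RA - RB.comp P).comp eA)
        = eB.comp ((E.comp A - B.comp E).comp eA) := by rw [key]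
      _ = ((-1 : ℂ) • (eB.comp B)).comp (E.comp eA) + eB.comp (E.comp (eA.comp A)) := by
          have hswap : ∀ X : H →L[ℂ] K, eB.comp (B.comp X) = B.comp (eB.comp X) := by
            intro X
            rw [← ContinuousLinearMap.comp_assoc, heBB, ContinuousLinearMap.comp_assoc]
          rw [heAA]
          simp only [ContinuousLinearMap.sub_comp, ContinuousLinearMap.comp_sub,
            neg_one_smul, ContinuousLinearMap.neg_comp, ContinuousLinearMap.comp_assoc,
            ContinuousLinearMap.smul_comp, hswap]
          abel
      _ = _ := by rw [hmulB, hmulA]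
  have hcont : Continuous fun s : ℝ =>
      (NormedSpace.exp (((t - s : ℝ) : ℂ) • B)).comp
        ((P.comp RA - RB.comp P).comp (NormedSpace.exp ((s : ℂ) • A))) := by
    have hc1 : Continuous fun s : ℝ => NormedSpace.exp (((t - s : ℝ) : ℂ) • B) :=
      (continuous_iff_continuousAt.2 fun x =>
        (NormedSpace.exp_analytic (𝕂 := ℂ) x).continuousAt).comp
        ((Complex.continuous_ofReal.comp (continuous_const.sub continuous_id)).smul
          continuous_const)
    have hc2 : Continuous fun s : ℝ => NormedSpace.exp ((s : ℂ) • A) :=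
      (continuous_iff_continuousAt.2 fun x =>
        (NormedSpace.exp_analytic (𝕂 := ℂ) x).continuousAt).comp (Complex.continuous_ofReal.smul continuous_const)
    exact hc1.clm_comp ((continuous_const (y := P.comp RA - RB.comp P)).clm_comp hc2)
  have hint := intervalIntegral.integral_eq_sub_of_hasDerivAt
    (f := g) (fun s _ => hderiv s) (hcont.intervalIntegrable 0 t)
  rw [hint]
  -- compute g t - g 0
  have heAt : RA.comp (NormedSpace.exp ((t : ℂ) • A))
      = (NormedSpace.exp ((t : ℂ) • A)).comp RA := by
    have : Commute ((t : ℂ) • A) RA := hcA.smul_left _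
    exact ((this.exp_left).eq).symm
  have heBt : (NormedSpace.exp ((t : ℂ) • B)).comp RB
      = RB.comp (NormedSpace.exp ((t : ℂ) • B)) := by
    have : Commute ((t : ℂ) • B) RB := hcB.smul_left _
    exact (this.exp_left).eq
  have hg0 : g 0 = RB.comp (((NormedSpace.exp ((t : ℂ) • B)).comp P).comp RA) := by
    rw [hg]
    simp only [Complex.ofReal_zero, sub_zero, zero_smul, NormedSpace.exp_zero]
    rw [hE]
    change (NormedSpace.exp ((t:ℂ) • B)).comp ((RB.comp (P.comp RA)).comp 1) = _
    rw [ContinuousLinearMap.one_def, ContinuousLinearMap.comp_id,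
      ← ContinuousLinearMap.comp_assoc, heBt,
      ContinuousLinearMap.comp_assoc, ContinuousLinearMap.comp_assoc]
  have hgt : g t = RB.comp ((P.comp (NormedSpace.exp ((t : ℂ) • A))).comp RA) := by
    rw [hg]
    simp only [sub_self, zero_smul, NormedSpace.exp_zero]
    change (1 : K →L[ℂ] K).comp (E.comp (NormedSpace.exp ((t:ℂ) • A))) = _
    rw [ContinuousLinearMap.one_def, ContinuousLinearMap.id_comp, hE,
      ContinuousLinearMap.comp_assoc, ContinuousLinearMap.comp_assoc, heAt,
      ← ContinuousLinearMap.comp_assoc P]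
  rw [hgt, hg0]
  rw [ContinuousLinearMap.sub_comp, ContinuousLinearMap.comp_sub]
end

section
/- Let H be a Hilbert space and, for each N ∈ ℕ, let H^N be a Hilbert space and P^N : H → H^N a bounded linear map with ‖P^N‖ ≤ 1. Let n ∈ ℕ, let Â ∈ L(H) and Â^N ∈ L(H^N) satisfy ‖Âʲ‖ ≤ M̄ and ‖(Â^N)ʲ‖ ≤ M̄ for all 0 ≤ j ≤ n and all N, let B̂ ∈ L(ℝ^μ, H) and B̂^N ∈ L(ℝ^μ, H^N), and let C ∈ L(H, ℝ^ν) and C^N ∈ L(H^N, ℝ^ν) with ‖C^N‖ ≤ K for all N. Assume: (1) for every z ∈ H, max_{0 ≤ j ≤ n} ‖(Â^N)ʲ P^N z − P^N Âʲ z‖_{H^N} → 0 as N → ∞; (2) for every u ∈ ℝ^μ, ‖B̂^N u − P^N B̂ u‖_{H^N} → 0; (3) for every z ∈ H, |C^N P^N z − C z|_{ℝ^ν} → 0. Let u_0, ..., u_{n−1} ∈ ℝ^μ, x_0 ∈ H, and define x_{j+1} = Â x_j + B̂ u_j on H and x^N_{j+1} = Â^N x^N_j + B̂^N u_j on H^N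 with x^N_0 = P^N x_0. Then max_{0 ≤ j ≤ n} ‖x^N_j − P^N x_j‖_{H^N} → 0 and max_{0 ≤ j ≤ n} |C^N x^N_j − C x_j|_{ℝ^ν} → 0 as N → ∞. -/
open Filter Topology

/-- abstract discrete-time state and output convergence (Corollary 5.1):
convergence of the powers of the sampled-time operators, of the input operators, and of
the output operators implies convergence of the states and outputs of the approximating
discrete-time systems on varying Hilbert spaces. -/
theorem stmt_9 {H : Type*} [NormedAddCommGroup H] [InnerProductSpace ℝ H] [CompleteSpace H]
    {HN : ℕ → Type*} [∀ N, NormedAddCommGroup (HN N)] [∀ N, InnerProductSpace ℝ (HN N)]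
    [∀ N, CompleteSpace (HN N)] {μ ν : ℕ}
    (PN : ∀ N, H →L[ℝ] HN N) (hPN : ∀ N, ‖PN N‖ ≤ 1)
    (n : ℕ) (Ahat : H →L[ℝ] H) (AhatN : ∀ N, HN N →L[ℝ] HN N)
    (Mbar : ℝ)
    (hAbound : ∀ j ≤ n, ‖Ahat ^ j‖ ≤ Mbar)
    (hANbound : ∀ N, ∀ j ≤ n, ‖AhatN N ^ j‖ ≤ Mbar)
    (Bhat : EuclideanSpace ℝ (Fin μ) →L[ℝ] H)
    (BhatN : ∀ N, EuclideanSpace ℝ (Fin μ) →L[ℝ] HN N)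
    (C : H →L[ℝ] EuclideanSpace ℝ (Fin ν))
    (CN : ∀ N, HN N →L[ℝ] EuclideanSpace ℝ (Fin ν))
    (K : ℝ) (hCNbound : ∀ N, ‖CN N‖ ≤ K)
    -- (1) convergence of powers
    (h1 : ∀ z : H, ∀ j ≤ n,
      Tendsto (fun N => ‖(AhatN N ^ j) (PN N z) - PN N ((Ahat ^ j) z)‖) atTop (𝓝 0))
    -- (2) convergence of input operators
    (h2 : ∀ u : EuclideanSpace ℝ (Fin μ),
      Tendsto (fun N => ‖BhatN N u - PN N (Bhat u)‖) atTop (𝓝 0))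
    -- (3) convergence of output operators
    (h3 : ∀ z : H, Tendsto (fun N => ‖CN N (PN N z) - C z‖) atTop (𝓝 0))
    -- the discrete-time systems
    (u : ℕ → EuclideanSpace ℝ (Fin μ)) (x : ℕ → H) (xN : ∀ N, ℕ → HN N)
    (hx : ∀ j, x (j + 1) = Ahat (x j) + Bhat (u j))
    (hxN0 : ∀ N, xN N 0 = PN N (x 0))
    (hxN : ∀ N j, xN N (j + 1) = AhatN N (xN N j) + BhatN N (u j)) :
    (∀ j ≤ n, Tendsto (fun N => ‖xN N j - PN N (x j)‖) atTop (𝓝 0)) ∧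
      ∀ j ≤ n, Tendsto (fun N => ‖CN N (xN N j) - C (x j)‖) atTop (𝓝 0) := by
  have hstate : ∀ j ≤ n, Tendsto (fun N => ‖xN N j - PN N (x j)‖) atTop (𝓝 0) := by
    intro j
    induction j with
    | zero =>
      intro _
      simp only [hxN0, sub_self, norm_zero]
      exact tendsto_const_nhds
    | succ j ih =>
      intro hj
      have hj' : j ≤ n := Nat.le_of_succ_le hj
      have h1n : 1 ≤ n := le_trans (Nat.one_le_iff_ne_zero.mpr (by omega)) hj
      have hd := ih hj'
      have hA := fun N => (by simpa using hANbound N 1 h1n : ‖AhatN N‖ ≤ Mbar)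
      have h1' : Tendsto (fun N => ‖AhatN N (PN N (x j)) - PN N (Ahat (x j))‖) atTop (𝓝 0) := by
        simpa using h1 (x j) 1 h1n
      have hbound : ∀ N, ‖xN N (j+1) - PN N (x (j+1))‖ ≤
          Mbar * ‖xN N j - PN N (x j)‖ +
          ‖AhatN N (PN N (x j)) - PN N (Ahat (x j))‖ +
          ‖BhatN N (u j) - PN N (Bhat (u j))‖ := by
        intro N
        have e : xN N (j+1) - PN N (x (j+1)) =
            AhatN N (xN N j - PN N (x j)) +
            (AhatN N (PN N (x j)) - PN N (Ahat (x j))) +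
            (BhatN N (u j) - PN N (Bhat (u j))) := by
          rw [hxN, hx, map_sub, map_add]; abel
        rw [e]
        calc ‖AhatN N (xN N j - PN N (x j)) +
              (AhatN N (PN N (x j)) - PN N (Ahat (x j))) +
              (BhatN N (u j) - PN N (Bhat (u j)))‖
            ≤ ‖AhatN N (xN N j - PN N (x j))‖ +
              ‖AhatN N (PN N (x j)) - PN N (Ahat (x j))‖ +
              ‖BhatN N (u j) - PN N (Bhat (u j))‖ := norm_add₃_le
          _ ≤ Mbar * ‖xN N j - PN N (x j)‖ +
              ‖AhatN N (PN N (x j)) - PN N (Ahat (x j))‖ +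
              ‖BhatN N (u j) - PN N (Bhat (u j))‖ := by
              gcongr
              exact le_trans ((AhatN N).le_opNorm _)
                (mul_le_mul_of_nonneg_right (hA N) (norm_nonneg _))
      have hlim : Tendsto (fun N => Mbar * ‖xN N j - PN N (x j)‖ +
          ‖AhatN N (PN N (x j)) - PN N (Ahat (x j))‖ +
          ‖BhatN N (u j) - PN N (Bhat (u j))‖) atTop (𝓝 0) := by
        have := ((hd.const_mul Mbar).add h1').add (h2 (u j))
        simpa using this
      exact squeeze_zero (fun N => norm_nonneg _) hbound hlim
  refine ⟨hstate, fun j hj => ?_⟩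
  have hd := hstate j hj
  have hbound : ∀ N, ‖CN N (xN N j) - C (x j)‖ ≤
      K * ‖xN N j - PN N (x j)‖ + ‖CN N (PN N (x j)) - C (x j)‖ := by
    intro N
    have e : CN N (xN N j) - C (x j) =
        CN N (xN N j - PN N (x j)) + (CN N (PN N (x j)) - C (x j)) := by
      rw [map_sub]; abel
    rw [e]
    calc ‖CN N (xN N j - PN N (x j)) + (CN N (PN N (x j)) - C (x j))‖
        ≤ ‖CN N (xN N j - PN N (x j))‖ + ‖CN N (PN N (x j)) - C (x j)‖ := norm_add_le _ _
      _ ≤ K * ‖xN N j - PN N (x j)‖ + ‖CN N (PN N (x j)) - C (x j)‖ := by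
          gcongr
          exact le_trans ((CN N).le_opNorm _)
            (mul_le_mul_of_nonneg_right (hCNbound N) (norm_nonneg _))
  have hlim : Tendsto (fun N => K * ‖xN N j - PN N (x j)‖ + ‖CN N (PN N (x j)) - C (x j)‖)
      atTop (𝓝 0) := by
    have := (hd.const_mul K).add (h3 (x j))
    simpa using this
  exact squeeze_zero (fun N => norm_nonneg _) hbound hlim
end
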